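/- Let G be a countable group and let λ be an isolated left order on G. Then any homomorphism ρ : G → Homeo₊(ℝ) that is tight at a point x₀ and realizes λ at x₀ is cocompact: there is a compact interval I ⊆ ℝ such that every ρ(G)-orbit intersects I. -/

import Mathlib

/-- A left-invariant strict total order on a group `G`. -/
structure LeftOrder (G : Type*) [Group G] where
  lt : G → G → Prop
  irrefl : ∀ g, ¬ lt g g
  trans : ∀ f g h, lt f g → lt g h → lt f h
  total : ∀ f g, f ≠ g → lt f g ∨ lt g f
  mul_left : ∀ f g h, lt f g → lt (h * f) (h * g)

/-- The topology on the space `LO(G)` of left orders of `G`, i.e. the topology induced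
from the product (pointwise convergence) topology on `{±1}^{G∖{e}}` via the sign map
`λ(g) = 1 ⟺ g ∈ P_λ`.  A subbasis is given by the sets of left orders for which a fixed
element `g` is positive, resp. not positive. -/
instance LeftOrder.instTopologicalSpace (G : Type*) [Group G] :
    TopologicalSpace (LeftOrder G) :=
  TopologicalSpace.generateFrom
    {U : Set (LeftOrder G) | ∃ g : G,
      U = {mu : LeftOrder G | mu.lt 1 g} ∨ U = {mu : LeftOrder G | ¬ mu.lt 1 g}}

/-- A left order is isolated if it is an isolated point of `LO(G)`. -/
def LeftOrder.IsIsolated {G : Type*} [Group G] (lam : LeftOrder G) : Prop :=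
  IsOpen ({lam} : Set (LeftOrder G))

/-- The orbit of the base point `x₀` under an action of `G` on `ℝ`.
An orientation-preserving homeomorphism of `ℝ` is the same thing as a strictly
monotone (increasing) bijection `ℝ → ℝ`, so actions by orientation-preserving
homeomorphisms are encoded as homomorphisms `G →* Equiv.Perm ℝ` all of whose
values are strictly monotone. -/
def orbitSet {G : Type*} [Group G] (rho : G →* Equiv.Perm ℝ) (x₀ : ℝ) : Set ℝ :=
  Set.range fun g : G => rho g x₀

/-- `rho` is tight at `x₀`: (1) the stabilizer of `x₀` is trivial, (2) the orbit of `x₀`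
is unbounded below and above, and (3) whenever the closure of the orbit meets `[a,b]`
exactly in `{a,b}` (with `a < b`), both `a` and `b` belong to the orbit. -/
def IsTightAt {G : Type*} [Group G] (rho : G →* Equiv.Perm ℝ) (x₀ : ℝ) : Prop :=
  (∀ g : G, rho g x₀ = x₀ → g = 1) ∧
  ¬ BddBelow (orbitSet rho x₀) ∧ ¬ BddAbove (orbitSet rho x₀) ∧
  ∀ a b : ℝ, a < b → closure (orbitSet rho x₀) ∩ Set.Icc a b = {a, b} →
    a ∈ orbitSet rho x₀ ∧ b ∈ orbitSet rho x₀

/-- `rho` realizes the left order `lam` at the base point `x₀`. -/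
def RealizesAt {G : Type*} [Group G] (rho : G →* Equiv.Perm ℝ) (x₀ : ℝ)
    (lam : LeftOrder G) : Prop :=
  ∀ f g : G, lam.lt f g ↔ rho f x₀ < rho g x₀

/-- From an open set in a generated topology and a point in it, one can extract a finite
family of subbasic sets containing the point whose intersection is contained in the set. -/
private lemma generateOpen_finite_inter {α : Type*} {𝒮 : Set (Set α)} {U : Set α}
    (h : TopologicalSpace.GenerateOpen 𝒮 U) :
    ∀ x ∈ U, ∃ T : Finset (Set α), (∀ s ∈ T, s ∈ 𝒮 ∧ x ∈ s) ∧
      ∀ y : α, (∀ s ∈ T, y ∈ s) → y ∈ U := by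
  classical
  induction h with
  | basic s hs =>
      intro x hx
      refine ⟨{s}, ?_, ?_⟩
      · intro t ht
        rw [Finset.mem_singleton] at ht
        subst ht
        exact ⟨hs, hx⟩
      · intro y hy
        exact hy s (Finset.mem_singleton_self s)
  | univ =>
      intro x _
      exact ⟨∅, by intro s hs; exact absurd hs (Finset.notMem_empty s), fun y _ => trivial⟩
  | inter U' V' hU hV ihU ihV =>
      intro x hx
      obtain ⟨T1, hT1, hT1'⟩ := ihU x hx.1
      obtain ⟨T2, hT2, hT2'⟩ := ihV x hx.2
      refine ⟨T1 ∪ T2, ?_, ?_⟩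
      · intro s hs
        rcases Finset.mem_union.mp hs with h | h
        · exact hT1 s h
        · exact hT2 s h
      · intro y hy
        exact ⟨hT1' y fun s hs => hy s (Finset.mem_union_left _ hs),
               hT2' y fun s hs => hy s (Finset.mem_union_right _ hs)⟩
  | sUnion S hS ih =>
      intro x hx
      obtain ⟨U', hU'S, hxU'⟩ := hx
      obtain ⟨T, hT, hT'⟩ := ih U' hU'S x hxU'
      exact ⟨T, hT, fun y hy => ⟨U', hU'S, hT' y hy⟩⟩

/-- If `λ` is an isolated left order on a countable group `G`, then any
homomorphism `ρ : G → Homeo₊(ℝ)` which is tight at `x₀` and realizes `λ` at `x₀` is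
cocompact: there is a compact interval `[a,b] ⊆ ℝ` meeting every `ρ(G)`-orbit. -/
theorem isolated_leftOrder_tight_realization_cocompact
    {G : Type*} [Group G] [Countable G] (lam : LeftOrder G)
    (hiso : lam.IsIsolated) (rho : G →* Equiv.Perm ℝ)
    (hmono : ∀ g : G, StrictMono ⇑(rho g)) (x₀ : ℝ)
    (htight : IsTightAt rho x₀) (hreal : RealizesAt rho x₀ lam) :
    ∃ a b : ℝ, a ≤ b ∧ ∀ x : ℝ, ∃ g : G, rho g x ∈ Set.Icc a b := by
  classical
  obtain ⟨hfree, hbb, hba, -⟩ := htight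
  by_contra hcon
  push_neg at hcon
  -- basic facts about the action
  have happly : ∀ (g h : G) (x : ℝ), rho (g * h) x = rho g (rho h x) := by
    intro g h x; rw [map_mul]; rfl
  have h1app : ∀ x : ℝ, rho (1 : G) x = x := by
    intro x; rw [map_one]; rfl
  have hinvL : ∀ (g : G) (x : ℝ), rho g⁻¹ (rho g x) = x := by
    intro g x; rw [map_inv]; exact Equiv.symm_apply_apply _ _
  have hinvR : ∀ (g : G) (x : ℝ), rho g (rho g⁻¹ x) = x := by
    intro g x; rw [map_inv]; exact Equiv.apply_symm_apply _ _
  have hmlt : ∀ (g : G) {u v : ℝ}, u < v → rho g u < rho g v :=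
    fun g => fun {u v} h => hmono g h
  have hcont : ∀ g : G, Continuous ⇑(rho g) := by
    intro g
    have h := (StrictMono.orderIsoOfSurjective _ (hmono g) (rho g).surjective).continuous
    rwa [StrictMono.coe_orderIsoOfSurjective] at h
  -- extract a finite determining family from isolation
  have hgen : TopologicalSpace.GenerateOpen
      {U : Set (LeftOrder G) | ∃ g : G,
        U = {mu : LeftOrder G | mu.lt 1 g} ∨ U = {mu : LeftOrder G | ¬ mu.lt 1 g}}
      ({lam} : Set (LeftOrder G)) := hiso
  obtain ⟨T, hT1, hT2⟩ := generateOpen_finite_inter hgen lam rfl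
  have hchoice : ∀ s ∈ T, ∃ g : G,
      s = {mu : LeftOrder G | mu.lt 1 g} ∨ s = {mu : LeftOrder G | ¬ mu.lt 1 g} :=
    fun s hs => (hT1 s hs).1
  choose! gf hgf using hchoice
  -- the finite symmetric set of relevant group elements
  set GS : Finset G := ((T.image gf ∪ T.image fun s => (gf s)⁻¹) ∪ {1}) with hGS
  have h1GS : (1 : G) ∈ GS := Finset.mem_union_right _ (Finset.mem_singleton_self 1)
  have hmemGS : ∀ s ∈ T, gf s ∈ GS := by
    intro s hs
    exact Finset.mem_union_left _ (Finset.mem_union_left _ (Finset.mem_image_of_mem _ hs))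
  have hGSinv : ∀ g ∈ GS, g⁻¹ ∈ GS := by
    intro g hg
    rcases Finset.mem_union.mp hg with hg1 | hg1
    · rcases Finset.mem_union.mp hg1 with hg2 | hg2
      · obtain ⟨s, hs, rfl⟩ := Finset.mem_image.mp hg2
        exact Finset.mem_union_left _
          (Finset.mem_union_right _ (Finset.mem_image_of_mem _ hs))
      · obtain ⟨s, hs, rfl⟩ := Finset.mem_image.mp hg2
        rw [inv_inv]
        exact Finset.mem_union_left _
          (Finset.mem_union_left _ (Finset.mem_image_of_mem _ hs))
    · have hg2 := Finset.mem_singleton.mp hg1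
      subst hg2
      rw [inv_one]
      exact h1GS
  -- the window [a', b']
  have hGSne : (GS.image fun g => rho g x₀).Nonempty :=
    ⟨rho 1 x₀, Finset.mem_image_of_mem _ h1GS⟩
  set b' : ℝ := (GS.image fun g => rho g x₀).max' hGSne + 1 with hb'
  set a' : ℝ := (GS.image fun g => rho g x₀).min' hGSne - 1 with ha'
  have hwinU : ∀ g ∈ GS, rho g x₀ < b' := by
    intro g hg
    have h := Finset.le_max' _ (rho g x₀)
      (Finset.mem_image_of_mem (fun g => rho g x₀) hg)
    rw [hb']; linarith
  have hwinL : ∀ g ∈ GS, a' < rho g x₀ := by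
    intro g hg
    have h := Finset.min'_le _ (rho g x₀)
      (Finset.mem_image_of_mem (fun g => rho g x₀) hg)
    rw [ha']; linarith
  have hx₀U : x₀ < b' := by have h := hwinU 1 h1GS; rwa [h1app] at h
  have hx₀L : a' < x₀ := by have h := hwinL 1 h1GS; rwa [h1app] at h
  -- the escaping witness
  obtain ⟨z, hz⟩ := hcon a' b' (le_of_lt (lt_trans hx₀L hx₀U))
  set Oz : Set ℝ := Set.range fun g : G => rho g z with hOz
  set C : Set ℝ := closure Oz with hC
  have hOzne : Oz.Nonempty := ⟨rho 1 z, 1, rfl⟩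
  have hOzsub : Oz ⊆ Set.Iic a' ∪ Set.Ici b' := by
    rintro t ⟨g, rfl⟩
    rcases lt_or_ge (rho g z) a' with h | h
    · exact Or.inl (le_of_lt h)
    · have h2 : ¬ rho g z ≤ b' := fun hb2 => (hz g) (Set.mem_Icc.mpr ⟨h, hb2⟩)
      exact Or.inr (le_of_lt (not_le.mp h2))
  have hCsub : C ⊆ Set.Iic a' ∪ Set.Ici b' :=
    closure_minimal hOzsub ((isClosed_Iic).union isClosed_Ici)
  have hOzim : ∀ g : G, (⇑(rho g)) '' Oz = Oz := by
    intro g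
    ext t
    constructor
    · rintro ⟨u, ⟨h, rfl⟩, rfl⟩
      refine ⟨g * h, ?_⟩
      show rho (g * h) z = rho g (rho h z)
      exact happly g h z
    · rintro ⟨h, rfl⟩
      exact ⟨rho (g⁻¹ * h) z, ⟨g⁻¹ * h, rfl⟩, by rw [← happly, mul_inv_cancel_left]⟩
  have hCinv : ∀ (g : G) {t : ℝ}, t ∈ C → rho g t ∈ C := by
    intro g t ht
    have h1 : rho g t ∈ (⇑(rho g)) '' C := ⟨t, ht, rfl⟩
    have h3 : (⇑(rho g)) '' C ⊆ closure ((⇑(rho g)) '' Oz) :=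
      image_closure_subset_closure_image (hcont g)
    rw [hOzim g] at h3
    exact h3 h1
  -- the orbit of the witness is unbounded above
  have hOzA : ¬ BddAbove Oz := by
    intro hbdd
    set m : ℝ := sSup Oz with hm
    have hmC : m ∈ C := csSup_mem_closure hOzne hbdd
    have hmfix : ∀ g : G, rho g m = m := by
      intro g
      have h4 := (hmono g).monotone.map_csSup_of_continuousAt
        ((hcont g).continuousAt) hOzne hbdd
      rw [hOzim g] at h4
      exact h4
    have hmne : m ≠ x₀ := by
      intro h
      rcases hCsub hmC with h' | h'
      · have h'' : m ≤ a' := h'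
        rw [h] at h''; exact absurd h'' (not_le.mpr hx₀L)
      · have h'' : b' ≤ m := h'
        rw [h] at h''; exact absurd h'' (not_le.mpr hx₀U)
    rcases lt_or_gt_of_ne hmne with hlt | hgt
    · apply hbb
      refine ⟨m, ?_⟩
      rintro t ⟨g, rfl⟩
      have h5 := hmlt g hlt
      rw [hmfix g] at h5
      exact le_of_lt h5
    · apply hba
      refine ⟨m, ?_⟩
      rintro t ⟨g, rfl⟩
      have h5 := hmlt g hgt
      rw [hmfix g] at h5
      exact le_of_lt h5
  obtain ⟨t₀, ht₀Oz, ht₀⟩ := not_bddAbove_iff.mp hOzA b'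
  -- the minimal point of C above the window
  set Y : Set ℝ := C ∩ Set.Ici b' with hY
  have hYne : Y.Nonempty := ⟨t₀, subset_closure ht₀Oz, le_of_lt ht₀⟩
  have hYbdd : BddBelow Y := ⟨b', fun t ht => ht.2⟩
  have hYcl : IsClosed Y := isClosed_closure.inter isClosed_Ici
  set y : ℝ := sInf Y with hy
  have hyY : y ∈ Y := hYcl.csInf_mem hYne hYbdd
  have hyC : y ∈ C := hyY.1
  have hyb : b' ≤ y := hyY.2
  have hymin : ∀ t ∈ C, b' ≤ t → y ≤ t := fun t h1 h2 => csInf_le hYbdd ⟨h1, h2⟩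
  have hx₀y : x₀ < y := lt_of_lt_of_le hx₀U hyb
  -- the no-flip lemma: λ-positive elements do not move y down
  have hnf : ∀ g : G, x₀ < rho g x₀ → y ≤ rho g y := by
    intro g hg
    by_contra hlt
    push_neg at hlt
    have htC : rho g y ∈ C := hCinv g hyC
    have hta : rho g y ≤ a' := by
      rcases hCsub htC with h | h
      · exact h
      · have h' : b' ≤ rho g y := h
        exact absurd (hymin _ htC h') (not_le.mpr hlt)
    have hFt : (0 : ℝ) ≤ rho g⁻¹ (rho g y) - rho g y := by
      rw [hinvL]
      linarith
    have hFx : rho g⁻¹ x₀ - x₀ ≤ 0 := by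
      have h2 : rho g⁻¹ x₀ < rho g⁻¹ (rho g x₀) := hmlt g⁻¹ hg
      rw [hinvL] at h2
      linarith
    have htx : rho g y ≤ x₀ := le_trans hta (le_of_lt hx₀L)
    have hcontF : ContinuousOn (fun u => rho g⁻¹ u - u) (Set.Icc (rho g y) x₀) :=
      ((hcont g⁻¹).sub continuous_id).continuousOn
    obtain ⟨ζ, hζmem, hζ⟩ := intermediate_value_Icc' htx hcontF ⟨hFx, hFt⟩
    have hζfix : rho g⁻¹ ζ = ζ := by
      have h6 : rho g⁻¹ ζ - ζ = 0 := hζ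
      linarith
    have hne : rho g y < ζ := by
      rcases eq_or_lt_of_le hζmem.1 with h | h
      · exfalso
        have h4 : rho g⁻¹ (rho g y) = rho g y := by rw [h]; exact hζfix
        rw [hinvL] at h4
        linarith [hζmem.2]
      · exact h
    have h7 : y < ζ := by
      have h3 := hmlt g⁻¹ hne
      rw [hinvL, hζfix] at h3
      exact h3
    have hζx : ζ ≤ x₀ := hζmem.2
    linarith
  have hnf' : ∀ g : G, rho g x₀ < x₀ → rho g y ≤ y := by
    intro g hg
    have h1 : x₀ < rho g⁻¹ x₀ := by
      have h := hmlt g⁻¹ hg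
      rwa [hinvL] at h
    have h2 := hnf g⁻¹ h1
    have h3 := (hmono g).monotone h2
    rwa [hinvR] at h3
  -- elements with orbit point inside the window fix y
  have hfix : ∀ g : G, x₀ < rho g x₀ → rho g x₀ < b' → rho g y = y := by
    intro g hg hgb
    rcases eq_or_lt_of_le (hnf g hg) with h | h
    · exact h.symm
    · exfalso
      have h2 : rho g⁻¹ y < y := by
        have h' := hmlt g⁻¹ h
        rwa [hinvL] at h'
      have h3 : x₀ < rho g⁻¹ y := by
        have h4 : rho g x₀ < y := lt_of_lt_of_le hgb hyb
        have h' := hmlt g⁻¹ h4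
        rwa [hinvL] at h'
      have h5 : rho g⁻¹ y ∈ C := hCinv g⁻¹ hyC
      rcases hCsub h5 with h6 | h6
      · have h6' : rho g⁻¹ y ≤ a' := h6
        linarith
      · have h6' : b' ≤ rho g⁻¹ y := h6
        exact absurd (hymin _ h5 h6') (not_le.mpr h2)
  have hfixGS : ∀ g ∈ GS, rho g y = y := by
    intro g hg
    rcases lt_trichotomy (rho g x₀) x₀ with h | h | h
    · have hg' := hGSinv g hg
      have h1 : x₀ < rho g⁻¹ x₀ := by
        have h' := hmlt g⁻¹ h
        rwa [hinvL] at h'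
      have h2 := hfix g⁻¹ h1 (hwinU g⁻¹ hg')
      have h3 := congrArg (⇑(rho g)) h2
      rw [hinvR] at h3
      exact h3.symm
    · have hone : g = 1 := hfree g h
      rw [hone, h1app]
    · exact hfix g h (hwinU g hg)
  -- some element moves y (otherwise the orbit of x₀ would be bounded above by y)
  have hKne : ¬ ∀ g : G, rho g y = y := by
    intro hall
    apply hba
    refine ⟨y, ?_⟩
    rintro t ⟨g, rfl⟩
    have h := hmlt g hx₀y
    rw [hall g] at h
    exact le_of_lt h
  push_neg at hKne
  obtain ⟨g₀, hg₀⟩ := hKne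
  -- the surgered order: reversed order at y, ties broken by lam
  set mu : LeftOrder G :=
    { lt := fun f g => rho g y < rho f y ∨ (rho f y = rho g y ∧ lam.lt f g)
      irrefl := by
        intro g h
        rcases h with h | ⟨-, h⟩
        · exact lt_irrefl _ h
        · exact lam.irrefl g h
      trans := by
        intro f g h h1 h2
        rcases h1 with h1 | ⟨e1, l1⟩ <;> rcases h2 with h2 | ⟨e2, l2⟩
        · exact Or.inl (lt_trans h2 h1)
        · exact Or.inl (e2 ▸ h1)
        · exact Or.inl (by rw [e1]; exact h2)
        · exact Or.inr ⟨e1.trans e2, lam.trans f g h l1 l2⟩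
      total := by
        intro f g hne
        rcases lt_trichotomy (rho f y) (rho g y) with h | h | h
        · exact Or.inr (Or.inl h)
        · rcases lam.total f g hne with h' | h'
          · exact Or.inl (Or.inr ⟨h, h'⟩)
          · exact Or.inr (Or.inr ⟨h.symm, h'⟩)
        · exact Or.inl (Or.inl h)
      mul_left := by
        intro f g h hfg
        rcases hfg with h1 | ⟨e, l⟩
        · exact Or.inl (by rw [happly h g, happly h f]; exact hmlt h h1)
        · exact Or.inr ⟨by rw [happly h f, happly h g, e], lam.mul_left f g h l⟩ }
    with hmu
  -- mu agrees with lam on all determining subbasic sets, hence mu = lam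
  have hmulam : mu = lam := by
    have hmem : ∀ s ∈ T, mu ∈ s := by
      intro s hs
      have hlam := (hT1 s hs).2
      have hfg : rho (gf s) y = y := hfixGS _ (hmemGS s hs)
      rcases hgf s hs with h | h
      · rw [h] at hlam ⊢
        have hlam' : lam.lt 1 (gf s) := hlam
        show mu.lt 1 (gf s)
        exact Or.inr ⟨by rw [h1app, hfg], hlam'⟩
      · rw [h] at hlam ⊢
        have hlam' : ¬ lam.lt 1 (gf s) := hlam
        show ¬ mu.lt 1 (gf s)
        intro hmu'
        rcases hmu' with h' | ⟨-, h'⟩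
        · rw [h1app, hfg] at h'
          exact lt_irrefl _ h'
        · exact hlam' h'
    have h := hT2 mu hmem
    simpa using h
  -- final contradiction
  rcases lt_or_gt_of_ne hg₀ with hlt | hgt
  · -- rho g₀ y < y, so mu.lt 1 g₀; but then lam.lt 1 g₀, so x₀ < rho g₀ x₀,
    -- and the no-flip lemma gives y ≤ rho g₀ y, contradiction
    have hmul : mu.lt 1 g₀ := Or.inl (by rw [h1app]; exact hlt)
    rw [hmulam] at hmul
    have h := (hreal 1 g₀).mp hmul
    rw [h1app] at h
    exact absurd hlt (not_lt.mpr (hnf g₀ h))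
  · -- y < rho g₀ y, so x₀ < rho g₀ x₀ (no-flip), so lam.lt 1 g₀, so mu.lt 1 g₀;
    -- but both disjuncts of mu.lt 1 g₀ are false
    have hx : x₀ < rho g₀ x₀ := by
      rcases lt_trichotomy (rho g₀ x₀) x₀ with h | h | h
      · exact absurd (hnf' g₀ h) (not_le.mpr hgt)
      · exfalso
        apply hg₀
        rw [hfree g₀ h, h1app]
      · exact h
    have hlam : lam.lt 1 g₀ := (hreal 1 g₀).mpr (by rwa [h1app])
    rw [← hmulam] at hlam
    rcases hlam with h' | ⟨e, -⟩
    · rw [h1app] at h'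
      exact absurd h' (not_lt.mpr (le_of_lt hgt))
    · rw [h1app] at e
      exact absurd e.symm (ne_of_gt hgt)
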